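/- Fix a real constant c with 0 < c < √2. Then lim_{τ→∞} √τ · arccos((2 + c²(e^{−1/τ} − 1))/2) = c. Consequently, the convergence time T_max = η / arccos((2 + c²(e^{−1/τ} − 1))/2) of the wave-equation algorithm grows like η√τ/c as the mixing time τ → ∞. -/

import Mathlib

open Filter

private lemma aux_exp_slope :
    Tendsto (fun τ : ℝ => τ * (1 - Real.exp (-1 / τ))) atTop (nhds 1) := by
  have h : Tendsto (slope Real.exp 0) (nhdsWithin 0 {(0:ℝ)}ᶜ) (nhds 1) := by
    have := Real.hasDerivAt_exp 0
    rw [hasDerivAt_iff_tendsto_slope] at this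
    simpa using this
  have h2 : Tendsto (fun τ : ℝ => -1 / τ) atTop (nhdsWithin 0 {(0:ℝ)}ᶜ) := by
    rw [tendsto_nhdsWithin_iff]
    constructor
    · have h3 := (tendsto_inv_atTop_zero (𝕜 := ℝ)).neg
      simp only [neg_zero] at h3
      exact h3.congr fun τ => by ring
    · filter_upwards [eventually_gt_atTop (0:ℝ)] with τ hτ
      simp only [Set.mem_compl_iff, Set.mem_singleton_iff]
      exact div_ne_zero (by norm_num) (ne_of_gt hτ)
  refine (h.comp h2).congr' ?_
  filter_upwards [eventually_gt_atTop (0:ℝ)] with τ hτ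
  have hτ' : τ ≠ 0 := ne_of_gt hτ
  simp only [Function.comp_apply, slope, Real.exp_zero, sub_zero, vsub_eq_sub]
  field_simp
  ring

private lemma aux_sin_slope :
    Tendsto (fun t : ℝ => Real.sin t / t) (nhdsWithin 0 {(0:ℝ)}ᶜ) (nhds 1) := by
  have h := Real.hasDerivAt_sin 0
  rw [hasDerivAt_iff_tendsto_slope] at h
  simp only [Real.cos_zero] at h
  refine h.congr fun t => ?_
  simp [slope, Real.sin_zero, div_eq_inv_mul]

theorem stmt_16 (c : ℝ) (hc0 : 0 < c) (hc2 : c < Real.sqrt 2) :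
    Tendsto (fun τ : ℝ =>
        Real.sqrt τ * Real.arccos ((2 + c ^ 2 * (Real.exp (-1 / τ) - 1)) / 2))
      atTop (nhds c) ∧
    ∀ η : ℝ, 0 < η →
      Tendsto (fun τ : ℝ =>
          (η / Real.arccos ((2 + c ^ 2 * (Real.exp (-1 / τ) - 1)) / 2)) / Real.sqrt τ)
        atTop (nhds (η / c)) := by
  set x : ℝ → ℝ := fun τ => (2 + c ^ 2 * (Real.exp (-1 / τ) - 1)) / 2 with hxdef
  -- exp(-1/τ) → 1
  have h0 : Tendsto (fun τ : ℝ => -1 / τ) atTop (nhds 0) := by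
    have h3 := (tendsto_inv_atTop_zero (𝕜 := ℝ)).neg
    simp only [neg_zero] at h3
    exact h3.congr fun τ => by ring
  have he : Tendsto (fun τ : ℝ => Real.exp (-1 / τ)) atTop (nhds 1) := by
    have := (Real.continuous_exp.tendsto 0).comp h0
    simpa [Function.comp_def] using this
  -- x → 1
  have hx1 : Tendsto x atTop (nhds 1) := by
    have hsub : Tendsto (fun τ : ℝ => Real.exp (-1 / τ) - 1) atTop (nhds (1 - 1)) :=
      he.sub (tendsto_const_nhds (x := (1:ℝ)))
    have hadd : Tendsto (fun τ : ℝ => 2 + c ^ 2 * (Real.exp (-1 / τ) - 1)) atTop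
        (nhds (2 + c ^ 2 * (1 - 1))) :=
      (tendsto_const_nhds (x := (2:ℝ))).add (hsub.const_mul (c ^ 2))
    have := hadd.div_const 2
    simpa using this
  -- arccos (x τ) → 0
  have hθ0 : Tendsto (fun τ => Real.arccos (x τ)) atTop (nhds 0) := by
    have := (Real.continuous_arccos.tendsto 1).comp hx1
    simpa [Function.comp_def] using this
  -- eventually x τ < 1 and -1 < x τ
  have hlt1 : ∀ᶠ τ in atTop, x τ < 1 := by
    filter_upwards [eventually_gt_atTop (0:ℝ)] with τ hτ
    have hexp : Real.exp (-1 / τ) < 1 := by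
      rw [Real.exp_lt_one_iff]
      exact div_neg_of_neg_of_pos (by norm_num) hτ
    have : c ^ 2 * (Real.exp (-1 / τ) - 1) < 0 :=
      mul_neg_of_pos_of_neg (by positivity) (by linarith)
    simp only [hxdef]
    linarith
  have hgt : ∀ᶠ τ in atTop, (-1 : ℝ) < x τ :=
    hx1.eventually (eventually_gt_nhds (by norm_num : (-1:ℝ) < 1))
  -- τ (1 - x τ ^ 2) → c ^ 2
  have hD : Tendsto (fun τ : ℝ => τ * (1 - x τ ^ 2)) atTop (nhds (c ^ 2)) := by
    have := ((aux_exp_slope.mul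
      ((tendsto_const_nhds (x := (1:ℝ)) (f := atTop)).add hx1)).const_mul (c ^ 2 / 2))
    have h2 : c ^ 2 / 2 * (1 * (1 + 1)) = c ^ 2 := by ring
    rw [h2] at this
    refine this.congr fun τ => ?_
    simp only [hxdef]
    ring
  -- √τ √(1-x²) → c
  have hE : Tendsto (fun τ : ℝ => Real.sqrt τ * Real.sqrt (1 - x τ ^ 2)) atTop (nhds c) := by
    have := (Real.continuous_sqrt.tendsto (c ^ 2)).comp hD
    rw [Real.sqrt_sq hc0.le] at this
    refine this.congr' ?_
    filter_upwards [eventually_ge_atTop (0:ℝ)] with τ hτ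
    simp only [Function.comp_apply]
    rw [Real.sqrt_mul hτ]
  -- arccos(x τ)/sin(arccos(x τ)) → 1
  have hθne : ∀ᶠ τ in atTop, Real.arccos (x τ) ≠ 0 := by
    filter_upwards [hlt1] with τ hτ
    exact ne_of_gt (Real.arccos_pos.mpr hτ)
  have hθn : Tendsto (fun τ => Real.arccos (x τ)) atTop (nhdsWithin 0 {(0:ℝ)}ᶜ) := by
    rw [tendsto_nhdsWithin_iff]
    exact ⟨hθ0, hθne.mono fun τ h => h⟩
  have hG : Tendsto (fun τ => Real.arccos (x τ) / Real.sin (Real.arccos (x τ)))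
      atTop (nhds 1) := by
    have := ((aux_sin_slope.comp hθn).inv₀ one_ne_zero)
    rw [inv_one] at this
    refine this.congr fun τ => ?_
    simp [Function.comp_apply, inv_div]
  -- part 1
  have part1 : Tendsto (fun τ : ℝ => Real.sqrt τ * Real.arccos (x τ)) atTop (nhds c) := by
    have := hE.mul hG
    rw [mul_one] at this
    refine this.congr' ?_
    filter_upwards [hlt1, hgt] with τ h1 h2
    have hsin : Real.sin (Real.arccos (x τ)) = Real.sqrt (1 - x τ ^ 2) := Real.sin_arccos _
    have hpos : 0 < 1 - x τ ^ 2 := by nlinarith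
    have hsq : Real.sqrt (1 - x τ ^ 2) ≠ 0 := ne_of_gt (Real.sqrt_pos.mpr hpos)
    rw [hsin]
    field_simp
  refine ⟨part1, fun η hη => ?_⟩
  have := (tendsto_const_nhds (x := η) (f := atTop)).div part1 (ne_of_gt hc0)
  refine this.congr fun τ => ?_
  simp only [Pi.div_apply, hxdef]
  rw [div_div, mul_comm]
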